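/- Let x ∈ ℝ^n have independent components with common variance v and common mean μ, and let ε be an m×n random matrix independent of x whose entries ε_{j,i} are independent with mean 0 and variance (σ²/n)·‖W'_{j,:}‖₂². Then Var[((W'+ε)x)_j] = (1+σ²)‖W'_{j,:}‖₂² v + σ² ‖W'_{j,:}‖₂² μ². -/

import Mathlib

open MeasureTheory ProbabilityTheory

/-- Variance of the perturbed output: if the components `x i` have common mean `μm`
and variance `v`, the perturbation entries `e i` (the `j`-th row of `ε`) have mean `0`
and variance `(σ²/n)·‖W'_{j,:}‖₂²`, and all of `x i, e i` are jointly independent, then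
`Var[((W'+ε)x)_j] = (1+σ²)‖W'_{j,:}‖₂² v + σ² ‖W'_{j,:}‖₂² μm²`. -/
theorem variance_perturbed_output
    {Ω : Type*} [MeasureSpace Ω] (μ : Measure Ω) [IsProbabilityMeasure μ]
    (m n : ℕ) (hn : 0 < n) (W : Matrix (Fin m) (Fin n) ℝ) (j : Fin m)
    (x : Fin n → Ω → ℝ) (e : Fin n → Ω → ℝ) (v μm σ : ℝ)
    (hxmeas : ∀ i, Measurable (x i)) (hemeas : ∀ i, Measurable (e i))
    (hxL2 : ∀ i, MemLp (x i) 2 μ) (heL2 : ∀ i, MemLp (e i) 2 μ)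
    (hindep : iIndepFun (Sum.elim x e) μ)
    (hxmean : ∀ i, ∫ ω, x i ω ∂μ = μm)
    (hxvar : ∀ i, variance (x i) μ = v)
    (hemean : ∀ i, ∫ ω, e i ω ∂μ = 0)
    (hevar : ∀ i, variance (e i) μ = σ ^ 2 / n * ∑ k, (W j k) ^ 2) :
    variance (fun ω => ∑ i, (W j i + e i ω) * x i ω) μ
      = (1 + σ ^ 2) * (∑ k, (W j k) ^ 2) * v
        + σ ^ 2 * (∑ k, (W j k) ^ 2) * μm ^ 2 := by
  set S : ℝ := ∑ k, (W j k) ^ 2 with hS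
  set s : ℝ := σ ^ 2 / n * S with hs
  set Y : Fin n → Ω → ℝ := fun i ω => (W j i + e i ω) * x i ω with hY
  set A : Fin n → Ω → ℝ := fun i ω => W j i + e i ω with hA
  have hsemeas : ∀ k : Fin n ⊕ Fin n, Measurable (Sum.elim x e k) := by
    rintro (i | i)
    · exact hxmeas i
    · exact hemeas i
  -- independence of A i and x i
  have hAx : ∀ i, IndepFun (A i) (x i) μ := by
    intro i
    have h1 : IndepFun (e i) (x i) μ :=
      hindep.indepFun (i := Sum.inr i) (j := Sum.inl i) (by simp)
    exact h1.comp (measurable_const_add (W j i)) measurable_id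
  have hAL2 : ∀ i, MemLp (A i) 2 μ := fun i => (memLp_const (W j i)).add (heL2 i)
  -- A i * x i is in L²
  have hYL2 : ∀ i, MemLp (Y i) 2 μ := by
    intro i
    have hsq : IndepFun (fun ω => A i ω ^ 2) (fun ω => x i ω ^ 2) μ :=
      (hAx i).comp (measurable_id.pow_const 2) (measurable_id.pow_const 2)
    have hint : Integrable (fun ω => A i ω ^ 2 * x i ω ^ 2) μ :=
      hsq.integrable_mul (hAL2 i).integrable_sq (hxL2 i).integrable_sq
    have hmeas : AEStronglyMeasurable (Y i) μ :=
      (((hemeas i).const_add (W j i)).mul (hxmeas i)).aestronglyMeasurable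
    rw [memLp_two_iff_integrable_sq hmeas]
    convert hint using 2 with ω
    ring
  -- means
  have hAmean : ∀ i, ∫ ω, A i ω ∂μ = W j i := by
    intro i
    rw [hA]
    rw [integral_add (integrable_const _) ((heL2 i).integrable one_le_two)]
    simp [hemean i]
  have hesq : ∀ i, ∫ ω, e i ω ^ 2 ∂μ = s := by
    intro i
    have := variance_eq_sub (heL2 i)
    rw [hevar i, hemean i] at this
    simp only [Pi.pow_apply] at this
    linarith [this]
  have hxsq : ∀ i, ∫ ω, x i ω ^ 2 ∂μ = v + μm ^ 2 := by
    intro i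
    have := variance_eq_sub (hxL2 i)
    rw [hxvar i, hxmean i] at this
    simp only [Pi.pow_apply] at this
    linarith [this]
  have hAsq : ∀ i, ∫ ω, A i ω ^ 2 ∂μ = W j i ^ 2 + s := by
    intro i
    have h1 : ∀ ω, A i ω ^ 2 = W j i ^ 2 + (2 * W j i * e i ω + e i ω ^ 2) := by
      intro ω; rw [hA]; ring
    simp_rw [h1]
    have i1 : Integrable (fun ω => 2 * W j i * e i ω) μ :=
      ((heL2 i).integrable one_le_two).const_mul _
    have i2 : Integrable (fun ω => e i ω ^ 2) μ := (heL2 i).integrable_sq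
    have i12 : Integrable (fun ω => 2 * W j i * e i ω + e i ω ^ 2) μ := i1.add i2
    rw [integral_add (integrable_const _) i12, integral_add i1 i2, integral_const_mul]
    simp [hemean i, hesq i]
  -- variance of each Y i
  have hvarY : ∀ i, variance (Y i) μ = W j i ^ 2 * v + s * v + s * μm ^ 2 := by
    intro i
    rw [variance_eq_sub (hYL2 i)]
    have hEY : ∫ ω, Y i ω ∂μ = W j i * μm := by
      have := (hAx i).integral_mul_eq_mul_integral ((hAL2 i).integrable one_le_two).aestronglyMeasurable
        ((hxL2 i).integrable one_le_two).aestronglyMeasurable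
      simp only [hY] at *
      rw [show (fun ω => (W j i + e i ω) * x i ω) = (fun ω => A i ω * x i ω) from rfl]
      calc ∫ ω, A i ω * x i ω ∂μ = (∫ ω, A i ω ∂μ) * ∫ ω, x i ω ∂μ := this
        _ = W j i * μm := by rw [hAmean i, hxmean i]
    have hEY2 : ∫ ω, Y i ω ^ 2 ∂μ = (W j i ^ 2 + s) * (v + μm ^ 2) := by
      have hsq : IndepFun (fun ω => A i ω ^ 2) (fun ω => x i ω ^ 2) μ :=
        (hAx i).comp (measurable_id.pow_const 2) (measurable_id.pow_const 2)
      have := hsq.integral_mul_eq_mul_integral (hAL2 i).integrable_sq.aestronglyMeasurable (hxL2 i).integrable_sq.aestronglyMeasurable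
      have h2 : ∀ ω, Y i ω ^ 2 = A i ω ^ 2 * x i ω ^ 2 := by intro ω; rw [hY, hA]; ring
      simp_rw [h2]
      rw [show ((fun ω => A i ω ^ 2) * fun ω => x i ω ^ 2) = fun ω => A i ω ^ 2 * x i ω ^ 2
        from rfl] at this
      rw [this, hAsq i, hxsq i]
    simp only [Pi.pow_apply]
    rw [hEY2, hEY]
    ring
  -- pairwise independence of Y
  have hpair : Set.Pairwise ↑(Finset.univ : Finset (Fin n))
      (fun i k => IndepFun (Y i) (Y k) μ) := by
    intro i _ k _ hik
    have h1 : IndepFun (fun ω => (x i ω, e i ω)) (fun ω => (x k ω, e k ω)) μ := by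
      have := hindep.indepFun_prodMk_prodMk hsemeas
        (Sum.inl i) (Sum.inr i) (Sum.inl k) (Sum.inr k)
        (by simp [hik]) (by simp) (by simp) (by simp [hik])
      exact this
    exact h1.comp (show Measurable (fun p : ℝ × ℝ => (W j i + p.2) * p.1) by fun_prop)
      (show Measurable (fun p : ℝ × ℝ => (W j k + p.2) * p.1) by fun_prop)
  have hsum : variance (∑ i, Y i) μ = ∑ i, variance (Y i) μ :=
    IndepFun.variance_sum (fun i _ => hYL2 i) hpair
  have hfun : (fun ω => ∑ i, (W j i + e i ω) * x i ω) = ∑ i, Y i := by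
    funext ω; simp [hY, Finset.sum_apply]
  rw [hfun, hsum]
  have hsumvar : ∑ i, variance (Y i) μ = S * v + n * (s * v) + n * (s * μm ^ 2) := by
    simp_rw [hvarY]
    rw [Finset.sum_add_distrib, Finset.sum_add_distrib, ← Finset.sum_mul, Finset.sum_const,
      Finset.sum_const]
    simp only [nsmul_eq_mul, Finset.card_univ, Fintype.card_fin, ← hS]
  rw [hsumvar, hs]
  have hn' : (n : ℝ) ≠ 0 := Nat.cast_ne_zero.mpr hn.ne'
  field_simp
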